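/- arXiv:1303.7462 — 6 statements merged into one kernel-verified Lean document; each statement's English description precedes it below -/
import Mathlib

section
/- Let w, s1, s2 be strings with s1, s2 nonempty, and let n1 < n2 ≤ |w| be natural numbers. Then applying the insert i(n1,s1) followed by the lifted insert i(n2+|s1|, s2) yields the same string as applying the insert i(n2,s2) followed by the (unlifted) insert i(n1,s1); that is, ins(n2+|s1|, s2)(ins(n1, s1)(w)) = ins(n1, s1)(ins(n2, s2)(w)). -/
/-- Insert `s` at position `n` in the string `w`. -/
def ins {α : Type*} (n : ℕ) (s w : List α) : List α :=
  w.take n ++ s ++ w.drop n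

/-- Two inserts, the first strictly to the left: the right one is lifted. -/
theorem inserts_separated_converge {α : Type*}
    (w s1 s2 : List α) (hs1 : s1 ≠ []) (hs2 : s2 ≠ [])
    (n1 n2 : ℕ) (h12 : n1 < n2) (h2 : n2 ≤ w.length) :
    ins (n2 + s1.length) s2 (ins n1 s1 w) = ins n1 s1 (ins n2 s2 w) := by
  have h1 : n1 ≤ w.length := by omega
  have hlen : (w.take n1 ++ s1).length = n1 + s1.length := by
    simp [List.length_take, Nat.min_eq_left h1]
  have e1 : n2 + s1.length = (w.take n1 ++ s1).length + (n2 - n1) := by omega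
  have lhs_take : (ins n1 s1 w).take (n2 + s1.length)
      = w.take n1 ++ s1 ++ (w.drop n1).take (n2 - n1) := by
    rw [ins, e1, List.take_append]
    rw [List.take_of_length_le (l := w.take n1 ++ s1) (by omega), Nat.add_sub_cancel_left]
  have lhs_drop : (ins n1 s1 w).drop (n2 + s1.length) = w.drop n2 := by
    rw [ins, e1, List.drop_append, List.drop_of_length_le (l := w.take n1 ++ s1) (by omega), List.nil_append, List.drop_drop]
    congr 1; omega
  have rhs_take : (ins n2 s2 w).take n1 = w.take n1 := by
    rw [ins, List.append_assoc]
    rw [List.take_append, List.take_take,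
      Nat.min_eq_left (le_of_lt h12), List.length_take, Nat.min_eq_left h2]
    have : n1 - n2 = 0 := by omega
    simp [this]
  have rhs_drop : (ins n2 s2 w).drop n1
      = (w.drop n1).take (n2 - n1) ++ s2 ++ w.drop n2 := by
    rw [ins, List.append_assoc, List.drop_append,
      List.length_take, Nat.min_eq_left h2]
    have : n1 - n2 = 0 := by omega
    rw [this, List.drop_take, List.drop_zero, List.append_assoc]
  show (ins n1 s1 w).take (n2 + s1.length) ++ s2 ++ (ins n1 s1 w).drop (n2 + s1.length)
      = (ins n2 s2 w).take n1 ++ s1 ++ (ins n2 s2 w).drop n1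
  rw [lhs_take, lhs_drop, rhs_take, rhs_drop]
  simp [List.append_assoc]
end

section
/- Let w, s1 be strings with s1 nonempty, l ≥ 1, and natural numbers n1 ≤ n2 with n2 + l ≤ |w|. Then applying the insert i(n1,s1) followed by the lifted delete d(n2+|s1|, l) yields the same string as applying the delete d(n2,l) followed by the (unlifted) insert i(n1,s1); that is, del(n2+|s1|, l)(ins(n1, s1)(w)) = ins(n1, s1)(del(n2, l)(w)). -/
/-- Delete `l` characters starting at position `n` in the string `w`. -/
def del {α : Type*} (n l : ℕ) (w : List α) : List α :=
  w.take n ++ w.drop (n + l)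

/-- An insert to the left of (or at the start of) a delete: the delete is lifted. -/
theorem insert_then_delete_converge {α : Type*}
    (w s1 : List α) (hs1 : s1 ≠ []) (l : ℕ) (hl : 1 ≤ l)
    (n1 n2 : ℕ) (h12 : n1 ≤ n2) (h2 : n2 + l ≤ w.length) :
    del (n2 + s1.length) l (ins n1 s1 w) = ins n1 s1 (del n2 l w) := by
  have hn1 : n1 ≤ w.length := by omega
  simp only [ins, del, List.take_append, List.drop_append,
    List.length_take, List.length_drop, min_eq_left hn1, List.append_assoc]
  have e1 : (n2 + s1.length) ⊓ n1 = n1 := by omega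
  have e2 : List.take (n2 + s1.length - n1) s1 = s1 := List.take_of_length_le (by omega)
  have e3 : n2 + s1.length - n1 - s1.length = n2 - n1 := by omega
  have e4 : List.drop (n2 + s1.length + l) (List.take n1 w) = [] :=
    List.drop_eq_nil_of_le (by rw [List.length_take]; omega)
  have e5 : List.drop (n2 + s1.length + l - n1) s1 = [] :=
    List.drop_eq_nil_of_le (by omega)
  have e6 : n1 + (n2 + s1.length + l - n1 - s1.length) = n2 + l := by omega
  have e7 : n1 ⊓ n2 = n1 := by omega
  have e8 : n1 - n2 ⊓ w.length = 0 := by omega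
  have e9 : List.drop n1 (List.take n2 w) = List.take (n2 - n1) (List.drop n1 w) := by
    rw [List.drop_take]
  simp [e1, e2, e3, e4, e5, e6, e7, e8, e9]
  rw [List.take_take, List.take_take, e1, e7]
end

section
/- Let w, s1 be strings with s1 nonempty, l ≥ 1, and natural numbers n1, n2 with n2 + l ≤ n1 ≤ |w|. Then applying the insert i(n1,s1) followed by the (unlifted) delete d(n2,l) yields the same string as applying the delete d(n2,l) followed by the lifted insert i(n1-l, s1); that is, del(n2, l)(ins(n1, s1)(w)) = ins(n1-l, s1)(del(n2, l)(w)). -/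
/-- A delete strictly to the left of an insert: the insert is lifted down. -/
theorem delete_then_insert_converge {α : Type*}
    (w s1 : List α) (hs1 : s1 ≠ []) (l : ℕ) (hl : 1 ≤ l)
    (n1 n2 : ℕ) (h21 : n2 + l ≤ n1) (h1 : n1 ≤ w.length) :
    del n2 l (ins n1 s1 w) = ins (n1 - l) s1 (del n2 l w) := by
  simp only [ins, del, List.take_append, List.drop_append,
    List.length_take, List.length_append, List.take_take, List.drop_drop, List.length_drop,
    List.take_drop, List.append_assoc]
  have e1 : n1 ⊓ w.length = n1 := by omega
  have e1' : n2 ⊓ w.length = n2 := by omega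
  have e2 : n2 ⊓ n1 = n2 := by omega
  have e3 : (n1 - l) ⊓ n2 = n2 := by omega
  have e4 : n2 - n1 = 0 := by omega
  have e5 : n2 + l - n1 = 0 := by omega
  rw [e1, e1', e2, e3, e4, e5]
  rw [show n2 + l + (n1 - l - n2) = n1 by omega]
  rw [show n1 + (0 - s1.length) = n1 by omega]
  have e7 : List.drop (n1 - l) (List.take n2 w) = [] :=
    List.drop_eq_nil_of_le (by simp [List.length_take]; omega)
  simp [e7]
end

section
/- Let w, s1 be strings with s1 nonempty, l2 ≥ 1, and natural numbers n1, n2 with n2 < n1 < n2 + l2 ≤ |w| (an insert landing strictly inside the range of a delete, so the delete is split by the insert). Then applying the insert i(n1,s1), followed by the left part of the split delete d(n2, n1-n2), followed by the lifted right part d(n2+|s1|, n2+l2-n1), yields the same string as applying the delete d(n2,l2) followed by the lifted insert i(n2,s1); that is, del(n2+|s1|, n2+l2-n1)(del(n2, n1-n2)(ins(n1, s1)(w))) = ins(n2, s1)(del(n2, l2)(w)). -/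
/-- An insert strictly inside the range of a delete: the delete is split
    by the insert and both orders of application converge. -/
theorem insert_inside_delete_converge {α : Type*}
    (w s1 : List α) (hs1 : s1 ≠ []) (l2 : ℕ) (hl2 : 1 ≤ l2)
    (n1 n2 : ℕ) (h1 : n2 < n1) (h2 : n1 < n2 + l2) (h3 : n2 + l2 ≤ w.length) :
    del (n2 + s1.length) (n2 + l2 - n1) (del n2 (n1 - n2) (ins n1 s1 w)) =
      ins n2 s1 (del n2 l2 w) := by
  have hn1 : n1 ≤ w.length := by omega
  have hn2 : n2 ≤ w.length := by omega
  have htk1 : (w.take n1).length = n1 := by simp [min_eq_left hn1]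
  have htk2 : (w.take n2).length = n2 := by simp [min_eq_left hn2]
  have step1 : del n2 (n1 - n2) (ins n1 s1 w) = w.take n2 ++ s1 ++ w.drop n1 := by
    unfold del ins
    rw [show n2 + (n1 - n2) = n1 by omega]
    rw [List.append_assoc, List.take_append_of_le_length (by omega),
      List.drop_append_of_le_length (by omega), List.take_take, min_eq_left (le_of_lt h1),
      List.drop_of_length_le htk1.le, List.nil_append, ← List.append_assoc]
  rw [step1]
  have step2 : del (n2 + s1.length) (n2 + l2 - n1) (w.take n2 ++ s1 ++ w.drop n1)
      = w.take n2 ++ s1 ++ w.drop (n2 + l2) := by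
    unfold del
    have hlen : (w.take n2 ++ s1).length = n2 + s1.length := by simp [htk2]
    rw [List.take_append_of_le_length (by simp [htk2]),
      List.take_of_length_le (by simp [htk2])]
    rw [show n2 + s1.length + (n2 + l2 - n1) = (w.take n2 ++ s1).length + (n2 + l2 - n1) by
      rw [hlen]]
    rw [List.drop_length_add_append, List.drop_drop, show n1 + (n2 + l2 - n1) = n2 + l2 by omega]
  rw [step2]
  unfold ins del
  rw [List.take_append_of_le_length (by omega), List.take_take, min_self,
    List.drop_append_of_le_length (by omega), List.drop_of_length_le (le_of_eq htk2),
    List.nil_append]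
end

section
/- Let w, s2 be strings with s2 nonempty, l1 ≥ 1, and natural numbers n1, n2 with n1 < n2 < n1 + l1 ≤ |w| (a delete whose range strictly contains the position of an insert, so the delete is split by the insert). Then applying the delete d(n1,l1) followed by the lifted insert i(n1,s2) yields the same string as applying the insert i(n2,s2), followed by the left part of the split delete d(n1, n2-n1), followed by the lifted right part d(n1+|s2|, n1+l1-n2); that is, ins(n1, s2)(del(n1, l1)(w)) = del(n1+|s2|, n1+l1-n2)(del(n1, n2-n1)(ins(n2, s2)(w))). -/
/-- A delete whose range strictly contains the position of an insert:
    the delete is split by the insert and both orders converge. -/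
theorem delete_split_by_insert_converge {α : Type*}
    (w s2 : List α) (hs2 : s2 ≠ []) (l1 : ℕ) (hl1 : 1 ≤ l1)
    (n1 n2 : ℕ) (h1 : n1 < n2) (h2 : n2 < n1 + l1) (h3 : n1 + l1 ≤ w.length) :
    ins n1 s2 (del n1 l1 w) =
      del (n1 + s2.length) (n1 + l1 - n2) (del n1 (n2 - n1) (ins n2 s2 w)) := by
  have hn2w : n2 ≤ w.length := le_trans h2.le h3
  have hn1w : n1 ≤ w.length := le_trans (le_trans h1.le h2.le) h3
  have ht1 : (w.take n1).length = n1 := List.length_take_of_le hn1w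
  have ht2 : (w.take n2).length = n2 := List.length_take_of_le hn2w
  have hLHS : ins n1 s2 (del n1 l1 w) = w.take n1 ++ s2 ++ w.drop (n1 + l1) := by
    unfold ins del
    rw [List.take_append_of_le_length (by omega), List.take_take, min_eq_left (le_refl n1),
      List.drop_append_of_le_length (by omega), List.drop_take]
    simp [Nat.sub_self]
  have hmid : del n1 (n2 - n1) (ins n2 s2 w) = w.take n1 ++ (s2 ++ w.drop n2) := by
    unfold ins del
    rw [List.append_assoc, List.take_append_of_le_length (by omega), List.take_take,
      min_eq_left (le_of_lt h1)]
    have : n1 + (n2 - n1) = n2 := by omega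
    rw [this, List.drop_append_of_le_length (by omega), List.drop_take, Nat.sub_self]
    simp
  rw [hLHS, hmid]
  unfold del
  have hA : (List.take n1 w ++ (s2 ++ List.drop n2 w)).take (n1 + s2.length)
      = List.take n1 w ++ s2 := by
    rw [← List.append_assoc]
    exact List.take_left' (by simp [ht1])
  have hB : (List.take n1 w ++ (s2 ++ List.drop n2 w)).drop (n1 + s2.length + (n1 + l1 - n2))
      = List.drop (n1 + l1) w := by
    rw [← List.append_assoc]
    have he : n1 + s2.length + (n1 + l1 - n2) = (List.take n1 w ++ s2).length + (n1 + l1 - n2) := by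
      simp [ht1]
    rw [he, List.drop_append, List.drop_drop]
    congr 1
    rw [List.drop_eq_nil_of_le (Nat.le_add_right _ _), List.nil_append, Nat.add_sub_cancel_left]
    congr 1
    omega
  rw [hA, hB, List.append_assoc]
end

section
/- Let α carry a linear order and order strings (lists over α) lexicographically. Let w, s1, s2 be strings with s1, s2 nonempty and n1, n2 ≤ |w|. Define the transformed positions m2 = n2 + |s1| if (n1 < n2, or n1 = n2 and s2 < s1 lexicographically), and m2 = n2 otherwise; symmetrically m1 = n1 + |s2| if (n2 < n1, or n2 = n1 and s1 < s2 lexicographically), and m1 = n1 otherwise. Then convergence holds for any pair of inserts: ins(m2, s2)(ins(n1, s1)(w)) = ins(m1, s1)(ins(n2, s2)(w)). -/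
lemma ins_comm {α : Type*} (s t w : List α) (a b : ℕ) (hab : a ≤ b)
    (hb : b ≤ w.length) :
    ins (b + s.length) t (ins a s w) = ins a s (ins b t w) := by
  have key : (w.take b).drop a = (w.drop a).take (b - a) := by
    rw [List.drop_take]
  simp only [ins, List.take_append, List.drop_append,
    List.length_take, List.length_append, List.append_assoc]
  have h1 : min a w.length = a := by omega
  have h2 : min b w.length = b := by omega
  rw [List.take_take]
  have e0 : min a b = a := by omega
  have e1 : (b + s.length) ⊓ a = a := by omega
  have e2 : b + s.length - a ⊓ w.length - s.length = b - a := by omega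
  have e3 : b + s.length - a ⊓ w.length = b - a + s.length := by omega
  have e4 : a - b ⊓ w.length = 0 := by omega
  rw [e1, e2, e3, e4, List.take_take, e0,
    List.take_of_length_le (show s.length ≤ b - a + s.length by omega),
    List.drop_eq_nil_of_le (show s.length ≤ b - a + s.length by omega),
    List.drop_eq_nil_of_le (show (w.take a).length ≤ b + s.length by simp; omega),
    key, List.drop_drop]
  simp [show b - a + a = b by omega, show a + (b - a) = b by omega]

/-- The insert–insert fragment of convergence: lift the insert whose position
    is strictly greater, and at equal positions lift the lexicographically
    smaller string. Concurrent application in either order converges. -/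
theorem insert_insert_transform_converge {α : Type*} [LinearOrder α]
    (w s1 s2 : List α) (hs1 : s1 ≠ []) (hs2 : s2 ≠ [])
    (n1 n2 : ℕ) (h1 : n1 ≤ w.length) (h2 : n2 ≤ w.length) :
    ins (if n1 < n2 ∨ (n1 = n2 ∧ s2 < s1) then n2 + s1.length else n2) s2
        (ins n1 s1 w) =
      ins (if n2 < n1 ∨ (n2 = n1 ∧ s1 < s2) then n1 + s2.length else n1) s1
        (ins n2 s2 w) := by
  rcases lt_trichotomy n1 n2 with h | h | h
  · rw [if_pos (Or.inl h), if_neg (by omega), ins_comm s1 s2 w n1 n2 h.le h2]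
  · subst h
    rcases lt_trichotomy s1 s2 with hs | hs | hs
    · rw [if_neg (by simp [hs.not_gt, not_lt.2 hs.le]), if_pos (Or.inr ⟨rfl, hs⟩),
        ins_comm s2 s1 w n1 n1 le_rfl h1]
    · subst hs; simp
    · rw [if_pos (Or.inr ⟨rfl, hs⟩), if_neg (by simp [hs.not_gt, not_lt.2 hs.le]),
        ins_comm s1 s2 w n1 n1 le_rfl h1]
  · rw [if_neg (by omega), if_pos (Or.inl h), ins_comm s2 s1 w n2 n1 h.le h1]
end
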